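/- Given a finite linearly ordered set whose elements are each colored red or blue, one can select at least half of the red elements and at least half of the blue elements so that all selected elements of one color precede all selected elements of the other color. -/
import Mathlib


open Finset

/-- Given a finite linearly ordered set whose elements are each colored red (`true`) or blue
(`false`), one can select at least half of the red elements and at least half of the blue
elements so that all selected elements of one color precede all selected elements of the
other color. -/
theorem stmt2 {S : Type*} [Fintype S] [LinearOrder S] [DecidableEq S] (c : S → Bool) :
    ∃ R' B' : Finset S,
      R' ⊆ univ.filter (fun x => c x = true) ∧
      B' ⊆ univ.filter (fun x => c x = false) ∧
      (univ.filter (fun x => c x = true)).card ≤ 2 * R'.card ∧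
      (univ.filter (fun x => c x = false)).card ≤ 2 * B'.card ∧
      ((∀ x ∈ R', ∀ y ∈ B', x < y) ∨ (∀ x ∈ B', ∀ y ∈ R', x < y)) := by
  classical
  set R := univ.filter (fun x => c x = true) with hR
  set B := univ.filter (fun x => c x = false) with hB
  by_cases hr : R = ∅
  · exact ⟨∅, B, by simp, subset_rfl, by simp [hr], by omega, Or.inl (by simp)⟩
  have hRne : R.Nonempty := nonempty_iff_ne_empty.mpr hr
  have hSne : (univ : Finset S).Nonempty := ⟨hRne.choose, mem_univ _⟩
  set T := univ.filter (fun x => R.card ≤ 2 * (R.filter (· ≤ x)).card) with hT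
  have hTne : T.Nonempty := by
    refine ⟨univ.max' hSne, ?_⟩
    rw [hT, mem_filter]
    refine ⟨mem_univ _, ?_⟩
    have : R.filter (· ≤ univ.max' hSne) = R := by
      apply filter_true_of_mem
      intro z _; exact le_max' _ _ (mem_univ _)
    rw [this]; omega
  set x := T.min' hTne with hx
  have hx1 : R.card ≤ 2 * (R.filter (· ≤ x)).card := by
    have h := T.min'_mem hTne
    simp only [hT, mem_filter] at h
    exact h.2
  have hlt : 2 * (R.filter (· < x)).card < R.card := by
    by_contra h
    push_neg at h
    have hne : (R.filter (· < x)).Nonempty := by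
      rw [← card_pos]
      have : 1 ≤ R.card := card_pos.mpr hRne
      omega
    set y := (R.filter (· < x)).max' hne with hy
    have hymem := (R.filter (· < x)).max'_mem hne
    rw [mem_filter] at hymem
    have hsub : R.filter (· < x) ⊆ R.filter (· ≤ y) := by
      intro z hz
      rw [mem_filter] at hz ⊢
      exact ⟨hz.1, le_max' _ _ (mem_filter.mpr hz)⟩
    have hyT : y ∈ T := by
      rw [hT, mem_filter]
      exact ⟨mem_univ _, le_trans h (by
        have := card_le_card hsub; omega)⟩
    have := T.min'_le y hyT
    exact absurd (lt_of_le_of_lt this hymem.2) (lt_irrefl x)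
  have hcx : c x = true := by
    by_contra h
    have hxR : x ∉ R := by
      rw [hR, mem_filter]; tauto
    have : R.filter (· ≤ x) = R.filter (· < x) := by
      apply filter_congr
      intro z hz
      have : z ≠ x := fun e => hxR (e ▸ hz)
      simp [lt_iff_le_and_ne, this]
    rw [this] at hx1
    omega
  have hxB : x ∉ B := by
    rw [hB, mem_filter]; simp [hcx]
  -- partition counts
  have hRpart : (R.filter (· < x)).card + (R.filter (fun z => ¬ z < x)).card = R.card :=
    card_filter_add_card_filter_not _
  have hRge : R.filter (fun z => ¬ z < x) = R.filter (fun z => x ≤ z) := by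
    apply filter_congr; intro z _; simp [not_lt]
  have hBpart : (B.filter (· < x)).card + (B.filter (fun z => ¬ z < x)).card = B.card :=
    card_filter_add_card_filter_not _
  have hBge : B.filter (fun z => ¬ z < x) = B.filter (fun z => x < z) := by
    apply filter_congr; intro z hz
    have : z ≠ x := fun e => hxB (e ▸ hz)
    constructor
    · intro h; exact lt_of_le_of_ne (not_lt.mp h) (Ne.symm this)
    · intro h; exact not_lt.mpr h.le
  by_cases hb : B.card ≤ 2 * (B.filter (fun z => x < z)).card
  · refine ⟨R.filter (· ≤ x), B.filter (fun z => x < z), ?_, ?_, hx1, hb, Or.inl ?_⟩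
    · exact (filter_subset _ _).trans (by rw [hR])
    · exact (filter_subset _ _).trans (by rw [hB])
    · intro a ha b hbmem
      rw [mem_filter] at ha hbmem
      exact lt_of_le_of_lt ha.2 hbmem.2
  · refine ⟨R.filter (fun z => x ≤ z), B.filter (· < x), ?_, ?_, ?_, ?_, Or.inr ?_⟩
    · exact (filter_subset _ _).trans (by rw [hR])
    · exact (filter_subset _ _).trans (by rw [hB])
    · rw [← hRge]; omega
    · rw [← hBge] at hb; omega
    · intro b hbmem a ha
      rw [mem_filter] at ha hbmem
      exact lt_of_lt_of_le hbmem.2 ha.2
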